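/- Let P_1, …, P_m be a Clifford system of signature (m, r) on ℝ^{2l}_s with m ≡ 0 (mod 4), r ≡ 0 (mod 2), and s ≤ 2l − 1, and set P := P_1P_2⋯P_m. If M_{+,1} is non-empty, then E_+(P) ∩ S^{2l−1}_s is non-empty and M_{+,1} is path-connected; likewise, if M_{+,2} is non-empty, then E_−(P) ∩ S^{2l−1}_s is non-empty and M_{+,2} is path-connected. -/

import Mathlib

open Matrix

noncomputable section

/-- Entries of the signature matrix `J_{r,m-r}`, with 1-based indices:
`η_{ii} = -1` for `1 ≤ i ≤ r` and `η_{ii} = 1` for `r < i`; off-diagonal entries vanish. -/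
def cliffEta (r i j : ℕ) : ℝ :=
  if i = j then (if i ≤ r then -1 else 1) else 0

/-- The matrix `J_{s,n-s} = diag(-E_s, E_{n-s})`. -/
def psJ (n s : ℕ) : Matrix (Fin n) (Fin n) ℝ :=
  Matrix.diagonal fun i => if (i : ℕ) < s then (-1 : ℝ) else 1

/-- The pseudo-inner product `⟨u, v⟩ = uᵀ J_{s,n-s} v` of `ℝ^n_s`. -/
def psInner (n s : ℕ) (u v : Fin n → ℝ) : ℝ :=
  u ⬝ᵥ ((psJ n s) *ᵥ v)

/-- A Clifford system of signature `(m, r)` on `ℝ^{2l}_s`, indexed by `1, …, m`: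
each `P i` is symmetric with respect to the pseudo-inner product, and
`P i * P j + P j * P i = 2 η_{ij} E_{2l}`. -/
def IsCliffordSystem (l s m r : ℕ)
    (P : ℕ → Matrix (Fin (2 * l)) (Fin (2 * l)) ℝ) : Prop :=
  (∀ i ∈ Finset.Icc 1 m, (P i)ᵀ = psJ (2 * l) s * P i * psJ (2 * l) s) ∧
  (∀ i ∈ Finset.Icc 1 m, ∀ j ∈ Finset.Icc 1 m,
    P i * P j + P j * P i
      = (2 * cliffEta r i j) • (1 : Matrix (Fin (2 * l)) (Fin (2 * l)) ℝ))

section Helpers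

variable {n s : ℕ}


lemma psJ_mul_psJ : psJ n s * psJ n s = 1 := by
  ext i j
  rcases eq_or_ne i j with h | h
  · subst h
    by_cases hi : (i:ℕ) < s <;>
      simp [psJ, Matrix.diagonal_mul_diagonal, Matrix.diagonal_apply_eq, Matrix.one_apply_eq, hi]
  · simp [psJ, Matrix.diagonal_mul_diagonal, Matrix.diagonal_apply_ne _ h, Matrix.one_apply_ne h]

lemma psInner_comm (u v : Fin n → ℝ) : psInner n s u v = psInner n s v u := by
  simp only [psInner, psJ, Matrix.mulVec_diagonal, dotProduct]
  apply Finset.sum_congr rfl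
  intro i _
  ring

lemma psInner_add_left (u v w : Fin n → ℝ) :
    psInner n s (u + v) w = psInner n s u w + psInner n s v w := by
  simp [psInner, add_dotProduct]

lemma psInner_smul_left (a : ℝ) (u w : Fin n → ℝ) :
    psInner n s (a • u) w = a * psInner n s u w := by
  simp [psInner, smul_dotProduct]

lemma psInner_add_right (u v w : Fin n → ℝ) :
    psInner n s u (v + w) = psInner n s u v + psInner n s u w := by
  rw [psInner_comm, psInner_add_left, psInner_comm u v, psInner_comm u w]

lemma psInner_smul_right (a : ℝ) (u w : Fin n → ℝ) :
    psInner n s u (a • w) = a * psInner n s u w := by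
  rw [psInner_comm, psInner_smul_left, psInner_comm]

lemma mulVec_dot (A : Matrix (Fin n) (Fin n) ℝ) (u w : Fin n → ℝ) :
    (A *ᵥ u) ⬝ᵥ w = u ⬝ᵥ (Aᵀ *ᵥ w) := by
  rw [dotProduct_mulVec, vecMul_transpose]

lemma psInner_adj {A : Matrix (Fin n) (Fin n) ℝ}
    (hA : Aᵀ = psJ n s * A * psJ n s) (u v : Fin n → ℝ) :
    psInner n s (A *ᵥ u) v = psInner n s u (A *ᵥ v) := by
  have : Aᵀ * psJ n s = psJ n s * A := by
    rw [hA, Matrix.mul_assoc, Matrix.mul_assoc, psJ_mul_psJ, Matrix.mul_one]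
  simp only [psInner, mulVec_dot, Matrix.mulVec_mulVec, this]

lemma psInner_skewadj {A : Matrix (Fin n) (Fin n) ℝ}
    (hA : Aᵀ = -(psJ n s * A * psJ n s)) (u v : Fin n → ℝ) :
    psInner n s (A *ᵥ u) v = -psInner n s u (A *ᵥ v) := by
  have : Aᵀ * psJ n s = -(psJ n s * A) := by
    rw [hA, Matrix.neg_mul, Matrix.mul_assoc, Matrix.mul_assoc, psJ_mul_psJ, Matrix.mul_one]
  simp only [psInner, mulVec_dot, Matrix.mulVec_mulVec, this, Matrix.neg_mulVec, dotProduct_neg]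




def cliffProd (P : ℕ → Matrix (Fin n) (Fin n) ℝ) (k : ℕ) :
    Matrix (Fin n) (Fin n) ℝ :=
  ((List.range k).map fun i => P (1 + i)).prod

lemma cliffProd_succ (P : ℕ → Matrix (Fin n) (Fin n) ℝ) (k : ℕ) :
    cliffProd P (k + 1) = cliffProd P k * P (1 + k) := by
  simp [cliffProd, List.range_succ]

section cliff
variable {m r : ℕ} {P : ℕ → Matrix (Fin n) (Fin n) ℝ}
variable (hrel : ∀ i ∈ Finset.Icc 1 m, ∀ j ∈ Finset.Icc 1 m,
    P i * P j + P j * P i = (2 * cliffEta r i j) • (1 : Matrix (Fin n) (Fin n) ℝ))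

include hrel

lemma cliff_swap {i j : ℕ} (hi : i ∈ Finset.Icc 1 m) (hj : j ∈ Finset.Icc 1 m)
    (hij : i ≠ j) : P i * P j = -(P j * P i) := by
  have h := hrel i hi j hj
  rw [cliffEta, if_neg hij] at h
  have : P i * P j + P j * P i = 0 := by simpa using h
  linear_combination (norm := noncomm_ring) this

lemma cliff_sq {i : ℕ} (hi : i ∈ Finset.Icc 1 m) :
    P i * P i = cliffEta r i i • (1 : Matrix (Fin n) (Fin n) ℝ) := by
  have h := hrel i hi i hi
  have h2 : (2:ℝ) • (P i * P i) = (2:ℝ) • (cliffEta r i i • (1 : Matrix (Fin n) (Fin n) ℝ)) := by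
    rw [smul_smul]
    rw [two_smul]
    exact h
  exact smul_right_injective _ (by norm_num) h2

lemma cliff_anticomm_lt (k : ℕ) (hk : k ≤ m) {j : ℕ} (hj : j ∈ Finset.Icc 1 m)
    (hkj : k < j) :
    P j * cliffProd P k = ((-1:ℝ)^k) • (cliffProd P k * P j) := by
  induction k with
  | zero => simp [cliffProd]
  | succ k ih =>
    have hk' : k ≤ m := Nat.le_of_succ_le hk
    have hkk : 1 + k ∈ Finset.Icc 1 m := by
      simp only [Finset.mem_Icc] at hj ⊢; omega
    have hne : j ≠ 1 + k := by omega
    rw [cliffProd_succ, ← Matrix.mul_assoc,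
      ih hk' (by omega), Matrix.smul_mul, Matrix.mul_assoc,
      cliff_swap hrel hj hkk hne]
    rw [Matrix.mul_neg, ← Matrix.mul_assoc, smul_neg, ← neg_smul, pow_succ]
    ring_nf

lemma cliff_anticomm_le (k : ℕ) (hk : k ≤ m) {j : ℕ} (hj1 : 1 ≤ j) (hjk : j ≤ k) :
    P j * cliffProd P k = ((-1:ℝ)^(k+1)) • (cliffProd P k * P j) := by
  induction k with
  | zero => omega
  | succ k ih =>
    have hk' : k ≤ m := Nat.le_of_succ_le hk
    have hkk : 1 + k ∈ Finset.Icc 1 m := by simp only [Finset.mem_Icc]; omega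
    have hj : j ∈ Finset.Icc 1 m := by simp only [Finset.mem_Icc]; omega
    rcases eq_or_lt_of_le hjk with he | hlt
    · -- j = k + 1
      have he' : j = 1 + k := by omega
      subst he'
      rw [cliffProd_succ, ← Matrix.mul_assoc, cliff_anticomm_lt hrel k hk' hkk (by omega),
        Matrix.smul_mul, Matrix.mul_assoc]
      rw [pow_succ, pow_succ]
      ring_nf
    · have hjk' : j ≤ k := by omega
      have hne : j ≠ 1 + k := by omega
      rw [cliffProd_succ, ← Matrix.mul_assoc, ih hk' hjk', Matrix.smul_mul, Matrix.mul_assoc,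
        cliff_swap hrel hj hkk hne, Matrix.mul_neg, ← Matrix.mul_assoc, smul_neg, ← neg_smul,
        pow_succ, pow_succ]
      ring_nf

lemma cliff_prod_sq (k : ℕ) (hk : k ≤ m) :
    cliffProd P k * cliffProd P k
      = (∏ i ∈ Finset.range k, ((-1:ℝ)^i * cliffEta r (1+i) (1+i))) •
        (1 : Matrix (Fin n) (Fin n) ℝ) := by
  induction k with
  | zero => simp [cliffProd]
  | succ k ih =>
    have hk' : k ≤ m := Nat.le_of_succ_le hk
    have hkk : 1 + k ∈ Finset.Icc 1 m := by simp only [Finset.mem_Icc]; omega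
    rw [cliffProd_succ]
    calc cliffProd P k * P (1+k) * (cliffProd P k * P (1+k))
        = cliffProd P k * ((P (1+k) * cliffProd P k) * P (1+k)) := by
          noncomm_ring
      _ = cliffProd P k * ((((-1:ℝ)^k) • (cliffProd P k * P (1+k))) * P (1+k)) := by
          rw [cliff_anticomm_lt hrel k hk' hkk (by omega)]
      _ = ((-1:ℝ)^k) • (cliffProd P k * cliffProd P k * (P (1+k) * P (1+k))) := by
          rw [Matrix.smul_mul, Matrix.mul_smul]; noncomm_ring
      _ = ((-1:ℝ)^k) • ((∏ i ∈ Finset.range k, ((-1:ℝ)^i * cliffEta r (1+i) (1+i))) •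
            (1 : Matrix (Fin n) (Fin n) ℝ) * (cliffEta r (1+k) (1+k) •
            (1 : Matrix (Fin n) (Fin n) ℝ))) := by
          rw [ih hk', cliff_sq hrel hkk]
      _ = (∏ i ∈ Finset.range (k+1), ((-1:ℝ)^i * cliffEta r (1+i) (1+i))) •
            (1 : Matrix (Fin n) (Fin n) ℝ) := by
          rw [Finset.prod_range_succ, Matrix.smul_mul, Matrix.mul_smul, Matrix.mul_one,
            smul_smul, smul_smul]
          congr 1
          ring

lemma cliff_prod_adj
    (hadj : ∀ i ∈ Finset.Icc 1 m, (P i)ᵀ = psJ n s * P i * psJ n s)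
    (k : ℕ) (hk : k ≤ m) :
    (cliffProd P k)ᵀ = (∏ i ∈ Finset.range k, ((-1:ℝ)^i)) •
      (psJ n s * cliffProd P k * psJ n s) := by
  induction k with
  | zero => simp [cliffProd]; exact psJ_mul_psJ.symm
  | succ k ih =>
    have hk' : k ≤ m := Nat.le_of_succ_le hk
    have hkk : 1 + k ∈ Finset.Icc 1 m := by simp only [Finset.mem_Icc]; omega
    rw [cliffProd_succ, Matrix.transpose_mul, hadj _ hkk, ih hk', Matrix.mul_smul]
    rw [show psJ n s * P (1+k) * psJ n s * (psJ n s * cliffProd P k * psJ n s)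
        = psJ n s * P (1+k) * (psJ n s * psJ n s) * cliffProd P k * psJ n s by
      noncomm_ring]
    rw [psJ_mul_psJ, Matrix.mul_one, Matrix.mul_assoc (psJ n s),
      cliff_anticomm_lt hrel k hk' hkk (by omega), Finset.prod_range_succ]
    rw [Matrix.mul_smul, Matrix.smul_mul, smul_smul, ← Matrix.mul_assoc]

end cliff

lemma prod_neg_one_pow {m : ℕ} (hm4 : m % 4 = 0) :
    (∏ i ∈ Finset.range m, ((-1:ℝ)^i)) = 1 := by
  rw [Finset.prod_pow_eq_pow_sum]
  obtain ⟨t, ht⟩ : ∃ t, m = 4 * t := ⟨m / 4, by omega⟩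
  subst ht
  rcases Nat.eq_zero_or_pos t with h0 | h0
  · subst h0; simp
  have h2 : (∑ i ∈ Finset.range (4*t), i) * 2 = (4*t) * (4*t - 1) :=
    Finset.sum_range_id_mul_two (4*t)
  have h4 : (4*t) * (4*t-1) = 4 * (t * (4*t-1)) := by
    generalize (4*t-1) = x
    ring
  have heven : Even (∑ i ∈ Finset.range (4*t), i) := by
    refine ⟨t * (4*t-1), ?_⟩
    omega
  exact heven.neg_one_pow

lemma prod_ite_neg_one (m r : ℕ) :
    ∏ i ∈ Finset.range m, (if i < r then (-1:ℝ) else 1) = (-1)^(min r m) := by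
  induction m with
  | zero => simp
  | succ m ih =>
    rw [Finset.prod_range_succ, ih]
    by_cases h : m < r
    · rw [if_pos h, show min r m = m by omega, show min r (m+1) = m+1 by omega, pow_succ]
    · rw [if_neg h, show min r m = r by omega, show min r (m+1) = r by omega, mul_one]

lemma prod_eta (m r : ℕ) (hr : r ≤ m) (hr2 : r % 2 = 0) :
    ∏ i ∈ Finset.range m, cliffEta r (1+i) (1+i) = 1 := by
  have heq : ∀ i, cliffEta r (1+i) (1+i) = if i < r then (-1:ℝ) else 1 := by
    intro i
    by_cases h : i < r
    · rw [cliffEta, if_pos rfl, if_pos (by omega), if_pos h]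
    · rw [cliffEta, if_pos rfl, if_neg (by omega), if_neg h]
  rw [Finset.prod_congr rfl (fun i _ => heq i), prod_ite_neg_one,
    show min r m = r by omega]
  exact (Nat.even_iff.2 hr2).neg_one_pow




lemma psInner_neg_right (u v : Fin n → ℝ) : psInner n s u (-v) = -psInner n s u v := by
  simpa using psInner_smul_right (-1 : ℝ) u v

lemma psInner_expand (a b : ℝ) (u v : Fin n → ℝ) :
    psInner n s (a • u + b • v) (a • u + b • v)
      = a^2 * psInner n s u u + 2*a*b * psInner n s u v + b^2 * psInner n s v v := by
  simp only [psInner_add_left, psInner_add_right, psInner_smul_left, psInner_smul_right]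
  rw [psInner_comm v u]
  ring

lemma psInner_expand_mat (C : Matrix (Fin n) (Fin n) ℝ) (a b : ℝ) (u v : Fin n → ℝ) :
    psInner n s (C *ᵥ (a • u + b • v)) (a • u + b • v)
      = a^2 * psInner n s (C *ᵥ u) u
        + a*b * (psInner n s (C *ᵥ u) v + psInner n s (C *ᵥ v) u)
        + b^2 * psInner n s (C *ᵥ v) v := by
  rw [Matrix.mulVec_add, Matrix.mulVec_smul, Matrix.mulVec_smul]
  simp only [psInner_add_left, psInner_add_right, psInner_smul_left, psInner_smul_right]
  ring

lemma eig_orth {A : Matrix (Fin n) (Fin n) ℝ} (hAadj : Aᵀ = psJ n s * A * psJ n s)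
    {u v : Fin n → ℝ} (hu : A *ᵥ u = u) (hv : A *ᵥ v = -v) :
    psInner n s u v = 0 := by
  have h1 : psInner n s u v = psInner n s (A *ᵥ u) v := by rw [hu]
  rw [psInner_adj hAadj, hv, psInner_neg_right] at h1
  linarith

lemma geom (n s m : ℕ)
    (P : ℕ → Matrix (Fin n) (Fin n) ℝ)
    (A J' : Matrix (Fin n) (Fin n) ℝ)
    (hAA : A * A = 1)
    (hAadj : Aᵀ = psJ n s * A * psJ n s)
    (hPA : ∀ j ∈ Finset.Icc 1 m, P j * A = -(A * P j))
    (hJJ : J' * J' = -1)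
    (hJA : J' * A = A * J')
    (hJskew : J'ᵀ = -(psJ n s * J' * psJ n s))
    (M : Set (Fin n → ℝ))
    (hM : M = {z | (psInner n s z z = 1 ∧
        ∀ j ∈ Finset.Icc 1 m, psInner n s (P j *ᵥ z) z = 0) ∧
      1 ≤ psInner n s ((1/2 : ℝ) • (z + A *ᵥ z)) ((1/2 : ℝ) • (z + A *ᵥ z))}) :
    M.Nonempty →
      ({z | A *ᵥ z = z ∧ psInner n s z z = 1} : Set (Fin n → ℝ)).Nonempty ∧
      IsPathConnected M := by
  intro hne
  have hmem : ∀ z, z ∈ M ↔ ((psInner n s z z = 1 ∧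
      ∀ j ∈ Finset.Icc 1 m, psInner n s (P j *ᵥ z) z = 0) ∧
      1 ≤ psInner n s ((1/2 : ℝ) • (z + A *ᵥ z)) ((1/2 : ℝ) • (z + A *ᵥ z))) := by
    intro z; rw [hM]; rfl
  have hA2 : ∀ z : Fin n → ℝ, A *ᵥ (A *ᵥ z) = z := by
    intro z; rw [Matrix.mulVec_mulVec, hAA, Matrix.one_mulVec]
  have hApj : ∀ j ∈ Finset.Icc 1 m, ∀ w : Fin n → ℝ,
      A *ᵥ (P j *ᵥ w) = -(P j *ᵥ (A *ᵥ w)) := by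
    intro j hj w
    have h : A * P j = -(P j * A) := by
      rw [hPA j hj, neg_neg]
    rw [Matrix.mulVec_mulVec, h, Matrix.neg_mulVec, ← Matrix.mulVec_mulVec]
  have hPjE : ∀ j ∈ Finset.Icc 1 m, ∀ w : Fin n → ℝ, A *ᵥ w = w →
      A *ᵥ (P j *ᵥ w) = -(P j *ᵥ w) := by
    intro j hj w hw; rw [hApj j hj w, hw]
  have hEmem : ∀ w : Fin n → ℝ, A *ᵥ w = w → psInner n s w w = 1 → w ∈ M := by
    intro w hw h1
    rw [hmem]
    refine ⟨⟨h1, fun j hj => ?_⟩, ?_⟩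
    · rw [psInner_comm]
      exact eig_orth hAadj hw (hPjE j hj w hw)
    · have hww : (1/2 : ℝ) • (w + A *ᵥ w) = w := by rw [hw]; module
      rw [hww, h1]
  -- circle path from w to -w through J' w
  have hNeg : ∀ w : Fin n → ℝ, A *ᵥ w = w → psInner n s w w = 1 →
      JoinedIn M w (-w) := by
    intro w hw h1
    have hJw : A *ᵥ (J' *ᵥ w) = J' *ᵥ w := by
      rw [Matrix.mulVec_mulVec, ← hJA, ← Matrix.mulVec_mulVec, hw]
    have hJJw : J' *ᵥ (J' *ᵥ w) = -w := by
      rw [Matrix.mulVec_mulVec, hJJ, Matrix.neg_mulVec, Matrix.one_mulVec]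
    have hBJw : psInner n s (J' *ᵥ w) (J' *ᵥ w) = 1 := by
      rw [psInner_skewadj hJskew, hJJw, psInner_neg_right, h1]; ring
    have hBwJw : psInner n s w (J' *ᵥ w) = 0 := by
      have h := psInner_skewadj hJskew w w
      have h2 := psInner_comm (n := n) (s := s) (J' *ᵥ w) w
      linarith
    set g : ℝ → (Fin n → ℝ) :=
      fun u => Real.cos (Real.pi * u) • w + Real.sin (Real.pi * u) • (J' *ᵥ w) with hg
    have hgmem : ∀ u : ℝ, g u ∈ M := by
      intro u
      apply hEmem
      · rw [hg]
        simp only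
        rw [Matrix.mulVec_add, Matrix.mulVec_smul, Matrix.mulVec_smul, hw, hJw]
      · rw [hg]
        simp only
        rw [psInner_expand, h1, hBJw, hBwJw]
        have := Real.sin_sq_add_cos_sq (Real.pi * u)
        nlinarith [this]
    have hg0 : g 0 = w := by rw [hg]; simp
    have hg1 : g 1 = -w := by
      rw [hg]; simp [Real.cos_pi, Real.sin_pi]
    have hgc : Continuous g := by rw [hg]; fun_prop
    refine ⟨⟨⟨fun t => g (t : ℝ), by fun_prop⟩, by simpa using hg0, by simpa using hg1⟩,
      fun t => hgmem (t : ℝ)⟩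
  -- normalized segment path
  have hSeg : ∀ w₁ w₂ : Fin n → ℝ, A *ᵥ w₁ = w₁ → psInner n s w₁ w₁ = 1 →
      A *ᵥ w₂ = w₂ → psInner n s w₂ w₂ = 1 → -1 < psInner n s w₁ w₂ →
      JoinedIn M w₁ w₂ := by
    intro w₁ w₂ h1 e1 h2 e2 hc
    set c := psInner n s w₁ w₂ with hcdef
    set q : ℝ → ℝ := fun u => (1-u)^2 + 2*(1-u)*u*c + u^2 with hqdef
    have hq : ∀ u : ℝ, 0 ≤ u → u ≤ 1 → 0 < q u := by
      intro u hu0 hu1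
      have key : q u = (1-2*u)^2 + 2*((1-u)*u)*(1+c) := by rw [hqdef]; ring
      rw [key]
      rcases eq_or_ne (1-2*u) 0 with h0 | h0
      · have hu : u = 1/2 := by linarith
        rw [h0, hu]; norm_num; linarith
      · have hp1 : 0 < (1-2*u)^2 := by positivity
        have hp2 : 0 ≤ 2*((1-u)*u)*(1+c) := by
          apply mul_nonneg
          · exact mul_nonneg (by norm_num) (mul_nonneg (by linarith) hu0)
          · linarith
        linarith
    set g : ℝ → (Fin n → ℝ) :=
      fun u => (Real.sqrt (q u))⁻¹ • ((1-u) • w₁ + u • w₂) with hg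
    have hgmem : ∀ u : ℝ, 0 ≤ u → u ≤ 1 → g u ∈ M := by
      intro u hu0 hu1
      have hqu := hq u hu0 hu1
      have hsq : Real.sqrt (q u) ≠ 0 := by
        rw [Real.sqrt_ne_zero' ]
        exact hqu
      apply hEmem
      · rw [hg]
        simp only
        rw [Matrix.mulVec_smul, Matrix.mulVec_add, Matrix.mulVec_smul, Matrix.mulVec_smul,
          h1, h2]
      · rw [hg]
        simp only
        rw [psInner_smul_left, psInner_smul_right, psInner_expand, e1, e2, ← hcdef]
        rw [show (1-u)^2*1 + 2*(1-u)*u*c + u^2*1 = q u by rw [hqdef]; ring]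
        rw [← mul_assoc, ← mul_inv, Real.mul_self_sqrt hqu.le, inv_mul_cancel₀ hqu.ne']
    have hg0 : g 0 = w₁ := by
      rw [hg]
      simp only
      norm_num [hqdef]
    have hg1 : g 1 = w₂ := by
      rw [hg]
      simp only
      norm_num [hqdef]
    refine ⟨⟨⟨fun t => g (t : ℝ), ?_⟩, by simpa using hg0, by simpa using hg1⟩,
      fun t => hgmem (t : ℝ) t.2.1 t.2.2⟩
    have : Continuous fun u : unitInterval => q (u : ℝ) := by rw [hqdef]; fun_prop
    rw [hg]
    apply Continuous.fun_smul
    · exact (Real.continuous_sqrt.comp this).inv₀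
        (fun t => Real.sqrt_ne_zero'.mpr (hq _ t.2.1 t.2.2))
    · fun_prop
  -- join two eigen-sphere points
  have hJoinE : ∀ w₁ w₂ : Fin n → ℝ, A *ᵥ w₁ = w₁ → psInner n s w₁ w₁ = 1 →
      A *ᵥ w₂ = w₂ → psInner n s w₂ w₂ = 1 → JoinedIn M w₁ w₂ := by
    intro w₁ w₂ h1 e1 h2 e2
    by_cases hc : -1 < psInner n s w₁ w₂
    · exact hSeg w₁ w₂ h1 e1 h2 e2 hc
    · push_neg at hc
      have h2' : A *ᵥ (-w₂) = -w₂ := by rw [Matrix.mulVec_neg, h2]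
      have e2' : psInner n s (-w₂) (-w₂) = 1 := by
        rw [show -w₂ = (-1:ℝ) • w₂ by module, psInner_smul_left, psInner_smul_right, e2]
        ring
      have hc' : -1 < psInner n s w₁ (-w₂) := by
        rw [psInner_neg_right]
        linarith
      exact (hSeg w₁ (-w₂) h1 e1 h2' e2' hc').trans (hNeg w₂ h2 e2).symm
  -- join any point of M to an eigen-sphere point
  have hJoinP : ∀ z ∈ M, ∃ w : Fin n → ℝ,
      (A *ᵥ w = w ∧ psInner n s w w = 1) ∧ JoinedIn M z w := by
    intro z hz
    obtain ⟨⟨hz1, hzP⟩, hz2⟩ := (hmem z).1 hz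
    set zp : Fin n → ℝ := (1/2 : ℝ) • (z + A *ᵥ z) with hzp
    set zm : Fin n → ℝ := (1/2 : ℝ) • (z - A *ᵥ z) with hzm
    have hzdec : z = zp + zm := by rw [hzp, hzm]; module
    have hAzp : A *ᵥ zp = zp := by
      rw [hzp, Matrix.mulVec_smul, Matrix.mulVec_add, hA2]
      module
    have hAzm : A *ᵥ zm = -zm := by
      rw [hzm, Matrix.mulVec_smul, Matrix.mulVec_sub, hA2]
      module
    set a := psInner n s zp zp with ha
    have ha1 : 1 ≤ a := hz2
    have ha0 : 0 < a := by linarith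
    have horth : psInner n s zp zm = 0 := eig_orth hAadj hAzp hAzm
    have hzc : 1 ≤ psInner n s zp zp := hz2
    clear_value zp zm
    set cc := psInner n s zm zm with hcc
    have hsum : a + cc = 1 := by
      have h := hz1
      rw [hzdec, show zp + zm = (1:ℝ) • zp + (1:ℝ) • zm by module,
        psInner_expand, horth, ← ha, ← hcc] at h
      linarith
    have hcc0 : cc ≤ 0 := by linarith
    have hPpp : ∀ j ∈ Finset.Icc 1 m, psInner n s (P j *ᵥ zp) zp = 0 := by
      intro j hj
      rw [psInner_comm]
      exact eig_orth hAadj hAzp (hPjE j hj zp hAzp)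
    have hPmm : ∀ j ∈ Finset.Icc 1 m, psInner n s (P j *ᵥ zm) zm = 0 := by
      intro j hj
      refine eig_orth hAadj ?_ hAzm
      rw [hApj j hj zm, hAzm, Matrix.mulVec_neg, neg_neg]
    have hPmix : ∀ j ∈ Finset.Icc 1 m,
        psInner n s (P j *ᵥ zp) zm + psInner n s (P j *ᵥ zm) zp = 0 := by
      intro j hj
      have h0 := hzP j hj
      rw [hzdec, show zp + zm = (1:ℝ) • zp + (1:ℝ) • zm by module,
        psInner_expand_mat, hPpp j hj, hPmm j hj] at h0
      linarith
    -- the deformation path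
    set g : ℝ → (Fin n → ℝ) :=
      fun u => Real.sqrt ((1 - (1-u)^2*cc)/a) • zp + (1-u) • zm with hg
    have hnum : ∀ u : ℝ, 1 ≤ 1 - (1-u)^2*cc := by
      intro u
      nlinarith [sq_nonneg (1-u)]
    have hfsq : ∀ u : ℝ, (Real.sqrt ((1 - (1-u)^2*cc)/a))^2 = (1 - (1-u)^2*cc)/a := by
      intro u
      exact Real.sq_sqrt (div_nonneg (by linarith [hnum u]) ha0.le)
    have hgmem : ∀ u : ℝ, g u ∈ M := by
      intro u
      set f := Real.sqrt ((1 - (1-u)^2*cc)/a) with hf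
      have hf2 : f^2 = (1 - (1-u)^2*cc)/a := hfsq u
      rw [hmem]
      have hAg : A *ᵥ g u = f • zp - (1-u) • zm := by
        rw [hg]
        simp only
        rw [Matrix.mulVec_add, Matrix.mulVec_smul, Matrix.mulVec_smul, hAzp, hAzm, ← hf]
        module
      refine ⟨⟨?_, ?_⟩, ?_⟩
      · rw [hg]
        simp only
        rw [psInner_expand, horth, ← ha, ← hcc, ← hf]
        have hkey : f^2*a = 1 - (1-u)^2*cc := by
          rw [hf2]; field_simp
        linear_combination hkey
      · intro j hj
        rw [hg]
        simp only
        rw [psInner_expand_mat, hPpp j hj, hPmm j hj]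
        have hkey := hPmix j hj
        linear_combination (f*(1-u)) * hkey
      · have hhalf : (1/2 : ℝ) • (g u + A *ᵥ g u) = f • zp := by
          rw [hAg, hg]
          simp only
          rw [← hf]
          module
        rw [hhalf, psInner_smul_left, psInner_smul_right, ← ha, ← mul_assoc, ← pow_two, hf2]
        have : (1 - (1-u)^2*cc)/a*a = 1 - (1-u)^2*cc := by field_simp
        rw [this]
        linarith [hnum u, sq_nonneg (1-u), mul_nonpos_of_nonneg_of_nonpos (sq_nonneg (1-u)) hcc0]
    have hg0 : g 0 = z := by
      rw [hg]
      simp only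
      rw [show (1 - (1-(0:ℝ))^2*cc) = a by nlinarith, div_self ha0.ne', Real.sqrt_one]
      rw [hzdec]
      module
    set w : Fin n → ℝ := Real.sqrt (1/a) • zp with hw
    have hg1 : g 1 = w := by
      rw [hg, hw]
      simp only
      norm_num
    have hwA : A *ᵥ w = w := by rw [hw, Matrix.mulVec_smul, hAzp]
    have hw1 : psInner n s w w = 1 := by
      rw [hw, psInner_smul_left, psInner_smul_right, ← ha, ← mul_assoc, ← pow_two,
        Real.sq_sqrt (by positivity : (0:ℝ) ≤ 1/a)]
      field_simp
    refine ⟨w, ⟨hwA, hw1⟩, ⟨⟨⟨fun t => g (t : ℝ), ?_⟩, by simpa using hg0, by simpa using hg1⟩,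
      fun t => hgmem (t : ℝ)⟩⟩
    rw [hg]
    fun_prop
  -- assemble
  obtain ⟨z₀, hz₀⟩ := hne
  obtain ⟨w₀, ⟨hw₀A, hw₀1⟩, hj₀⟩ := hJoinP z₀ hz₀
  refine ⟨⟨w₀, hw₀A, hw₀1⟩, z₀, hz₀, ?_⟩
  intro y hy
  obtain ⟨w, ⟨hwA, hw1⟩, hjy⟩ := hJoinP y hy
  exact (hj₀.trans (hJoinE w₀ w hw₀A hw₀1 hwA hw1)).trans hjy.symm

end Helpers

/-- with `m ≡ 0 (mod 4)`, `r ≡ 0 (mod 2)`, `s ≤ 2l - 1`, and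
`P = P_1 ⋯ P_m`: if `M₊,₁ ≠ ∅` then `E₊(P) ∩ S^{2l-1}_s ≠ ∅` and `M₊,₁` is
path-connected; likewise, if `M₊,₂ ≠ ∅` then `E₋(P) ∩ S^{2l-1}_s ≠ ∅` and `M₊,₂`
is path-connected. Here `z₊ = (z + Pz)/2` is the `E₊(P)`-component of `z`. -/
theorem Mplus_pieces_pathConnected (l s m r : ℕ) (hl : 0 < l) (hs : s ≤ 2 * l - 1)
    (hm : 2 ≤ m) (hm4 : m % 4 = 0) (hr : r ≤ m) (hr2 : r % 2 = 0)
    (P : ℕ → Matrix (Fin (2 * l)) (Fin (2 * l)) ℝ)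
    (hP : IsCliffordSystem l s m r P)
    (Pm : Matrix (Fin (2 * l)) (Fin (2 * l)) ℝ)
    (hPm : Pm = ((List.range m).map fun k => P (1 + k)).prod)
    (Mp : Set (Fin (2 * l) → ℝ))
    (hMp : Mp = {x | psInner (2 * l) s x x = 1 ∧
      ∀ j ∈ Finset.Icc 1 m, psInner (2 * l) s (P j *ᵥ x) x = 0})
    (zpl : (Fin (2 * l) → ℝ) → (Fin (2 * l) → ℝ))
    (hzpl : zpl = fun z => (1 / 2 : ℝ) • (z + Pm *ᵥ z))
    (M1 M2 : Set (Fin (2 * l) → ℝ))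
    (hM1 : M1 = {z ∈ Mp | 1 ≤ psInner (2 * l) s (zpl z) (zpl z)})
    (hM2 : M2 = {z ∈ Mp | psInner (2 * l) s (zpl z) (zpl z) ≤ 0}) :
    (M1.Nonempty →
      ({z | Pm *ᵥ z = z ∧ psInner (2 * l) s z z = 1} :
        Set (Fin (2 * l) → ℝ)).Nonempty ∧ IsPathConnected M1) ∧
    (M2.Nonempty →
      ({z | Pm *ᵥ z = -z ∧ psInner (2 * l) s z z = 1} :
        Set (Fin (2 * l) → ℝ)).Nonempty ∧ IsPathConnected M2) := by
  obtain ⟨hPadj, hrel⟩ := hP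
  have hPmQ : Pm = cliffProd P m := hPm
  have hmeven : (-1:ℝ)^(m+1) = -1 := by
    have : Odd (m+1) := by
      rcases Nat.even_or_odd m with he | ho
      · exact Even.add_one he
      · exfalso; rw [Nat.odd_iff] at ho; omega
    exact this.neg_one_pow
  have hPmsq : Pm * Pm = 1 := by
    rw [hPmQ, cliff_prod_sq hrel m le_rfl, Finset.prod_mul_distrib,
      prod_neg_one_pow hm4, prod_eta m r hr hr2, one_mul, one_smul]
  have hPmadj : Pmᵀ = psJ (2*l) s * Pm * psJ (2*l) s := by
    rw [hPmQ, cliff_prod_adj hrel hPadj m le_rfl, prod_neg_one_pow hm4, one_smul]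
  have hPmanti : ∀ j ∈ Finset.Icc 1 m, P j * Pm = -(Pm * P j) := by
    intro j hj
    rw [Finset.mem_Icc] at hj
    rw [hPmQ, cliff_anticomm_le hrel m le_rfl hj.1 hj.2, hmeven, neg_one_smul]
  have h1m : 1 ∈ Finset.Icc 1 m := by simp only [Finset.mem_Icc]; omega
  have h2m : 2 ∈ Finset.Icc 1 m := by simp only [Finset.mem_Icc]; omega
  have hswap12 : P 1 * P 2 = -(P 2 * P 1) := cliff_swap hrel h1m h2m (by norm_num)
  have hswap21 : P 2 * P 1 = -(P 1 * P 2) := by rw [hswap12, neg_neg]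
  have hsq1 : P 1 * P 1 = cliffEta r 1 1 • (1 : Matrix (Fin (2*l)) (Fin (2*l)) ℝ) :=
    cliff_sq hrel h1m
  have hsq2 : P 2 * P 2 = cliffEta r 2 2 • (1 : Matrix (Fin (2*l)) (Fin (2*l)) ℝ) :=
    cliff_sq hrel h2m
  have heta : cliffEta r 1 1 * cliffEta r 2 2 = 1 := by
    rcases Nat.eq_zero_or_pos r with h0 | h0
    · subst h0; norm_num [cliffEta]
    · have h2r : 2 ≤ r := by omega
      rw [cliffEta, cliffEta, if_pos rfl, if_pos rfl, if_pos (by omega), if_pos h2r]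
      norm_num
  have hJJ : (P 1 * P 2) * (P 1 * P 2) = -1 := by
    calc (P 1 * P 2) * (P 1 * P 2) = P 1 * (P 2 * P 1) * P 2 := by noncomm_ring
      _ = P 1 * (-(P 1 * P 2)) * P 2 := by rw [hswap21]
      _ = -((P 1 * P 1) * (P 2 * P 2)) := by noncomm_ring
      _ = -((cliffEta r 1 1 • (1 : Matrix (Fin (2*l)) (Fin (2*l)) ℝ)) *
            (cliffEta r 2 2 • (1 : Matrix (Fin (2*l)) (Fin (2*l)) ℝ))) := by
          rw [hsq1, hsq2]
      _ = -((cliffEta r 1 1 * cliffEta r 2 2) • (1 : Matrix (Fin (2*l)) (Fin (2*l)) ℝ)) := by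
          rw [Matrix.smul_mul, Matrix.mul_smul, Matrix.mul_one, smul_smul]
      _ = -1 := by rw [heta, one_smul]
  have hJA : (P 1 * P 2) * Pm = Pm * (P 1 * P 2) := by
    have h1 : P 1 * Pm = -(Pm * P 1) := hPmanti 1 h1m
    have h2 : P 2 * Pm = -(Pm * P 2) := hPmanti 2 h2m
    calc (P 1 * P 2) * Pm = P 1 * (P 2 * Pm) := by noncomm_ring
      _ = P 1 * (-(Pm * P 2)) := by rw [h2]
      _ = -((P 1 * Pm) * P 2) := by noncomm_ring
      _ = -((-(Pm * P 1)) * P 2) := by rw [h1]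
      _ = Pm * (P 1 * P 2) := by noncomm_ring
  have hJskew : (P 1 * P 2)ᵀ = -(psJ (2*l) s * (P 1 * P 2) * psJ (2*l) s) := by
    rw [Matrix.transpose_mul, hPadj 1 h1m, hPadj 2 h2m]
    have hmid : (psJ (2*l) s * P 2 * psJ (2*l) s) * (psJ (2*l) s * P 1 * psJ (2*l) s)
        = psJ (2*l) s * (P 2 * P 1) * psJ (2*l) s := by
      calc (psJ (2*l) s * P 2 * psJ (2*l) s) * (psJ (2*l) s * P 1 * psJ (2*l) s)
          = psJ (2*l) s * P 2 * (psJ (2*l) s * psJ (2*l) s) * P 1 * psJ (2*l) s := by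
            noncomm_ring
        _ = psJ (2*l) s * (P 2 * P 1) * psJ (2*l) s := by
            rw [psJ_mul_psJ]; noncomm_ring
    rw [hmid, hswap21, Matrix.mul_neg, Matrix.neg_mul]
  -- the two applications of geom
  have hM1' : M1 = {z | (psInner (2*l) s z z = 1 ∧
      ∀ j ∈ Finset.Icc 1 m, psInner (2*l) s (P j *ᵥ z) z = 0) ∧
      1 ≤ psInner (2*l) s ((1/2 : ℝ) • (z + Pm *ᵥ z)) ((1/2 : ℝ) • (z + Pm *ᵥ z))} := by
    rw [hM1, hMp, hzpl]
    rfl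
  -- key identity: the two squared lengths add to the full one
  have key : ∀ z : Fin (2*l) → ℝ, psInner (2*l) s z z = 1 →
      psInner (2*l) s ((1/2 : ℝ) • (z + Pm *ᵥ z)) ((1/2 : ℝ) • (z + Pm *ᵥ z))
      + psInner (2*l) s ((1/2 : ℝ) • (z + (-Pm) *ᵥ z)) ((1/2 : ℝ) • (z + (-Pm) *ᵥ z)) = 1 := by
    intro z h1
    set zp : Fin (2*l) → ℝ := (1/2 : ℝ) • (z + Pm *ᵥ z) with hzpd
    set zm : Fin (2*l) → ℝ := (1/2 : ℝ) • (z + (-Pm) *ᵥ z) with hzmd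
    have hzdec : z = zp + zm := by
      rw [hzpd, hzmd, Matrix.neg_mulVec]; module
    have hAzp : Pm *ᵥ zp = zp := by
      rw [hzpd, Matrix.mulVec_smul, Matrix.mulVec_add, Matrix.mulVec_mulVec, hPmsq,
        Matrix.one_mulVec]
      module
    have hAzm : Pm *ᵥ zm = -zm := by
      rw [hzmd, Matrix.neg_mulVec, Matrix.mulVec_smul, Matrix.mulVec_add, Matrix.mulVec_neg,
        Matrix.mulVec_mulVec, hPmsq, Matrix.one_mulVec]
      module
    clear_value zp zm
    have horth : psInner (2*l) s zp zm = 0 := eig_orth hPmadj hAzp hAzm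
    rw [hzdec, show zp + zm = (1:ℝ) • zp + (1:ℝ) • zm by module, psInner_expand, horth] at h1
    linarith
  have hM2' : M2 = {z | (psInner (2*l) s z z = 1 ∧
      ∀ j ∈ Finset.Icc 1 m, psInner (2*l) s (P j *ᵥ z) z = 0) ∧
      1 ≤ psInner (2*l) s ((1/2 : ℝ) • (z + (-Pm) *ᵥ z)) ((1/2 : ℝ) • (z + (-Pm) *ᵥ z))} := by
    rw [hM2, hMp, hzpl]
    ext z
    simp only [Set.mem_setOf_eq]
    constructor
    · rintro ⟨⟨h1, h2⟩, hle⟩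
      have := key z h1
      exact ⟨⟨h1, h2⟩, by linarith⟩
    · rintro ⟨⟨h1, h2⟩, hge⟩
      have := key z h1
      exact ⟨⟨h1, h2⟩, by linarith⟩
  constructor
  · intro hne1
    exact geom (2*l) s m P Pm (P 1 * P 2) hPmsq hPmadj hPmanti hJJ hJA hJskew M1 hM1' hne1
  · intro hne2
    have hAA' : (-Pm) * (-Pm) = 1 := by rw [Matrix.neg_mul, Matrix.mul_neg, neg_neg, hPmsq]
    have hAadj' : (-Pm)ᵀ = psJ (2*l) s * (-Pm) * psJ (2*l) s := by
      rw [Matrix.transpose_neg, hPmadj, Matrix.mul_neg, Matrix.neg_mul]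
    have hPA' : ∀ j ∈ Finset.Icc 1 m, P j * (-Pm) = -((-Pm) * P j) := by
      intro j hj
      rw [Matrix.mul_neg, hPmanti j hj, neg_neg, Matrix.neg_mul, neg_neg]
    have hJA' : (P 1 * P 2) * (-Pm) = (-Pm) * (P 1 * P 2) := by
      rw [Matrix.mul_neg, Matrix.neg_mul, hJA]
    obtain ⟨hnon, hconn⟩ := geom (2*l) s m P (-Pm) (P 1 * P 2) hAA' hAadj' hPA' hJJ hJA'
      hJskew M2 hM2' hne2
    refine ⟨?_, hconn⟩
    obtain ⟨z, hz1, hz2⟩ := hnon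
    refine ⟨z, ?_, hz2⟩
    rw [Matrix.neg_mulVec] at hz1
    exact neg_eq_iff_eq_neg.mp hz1
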